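/- Every simplicially toric sharp monoid P admits a minimal free resolution, unique up to unique isomorphism: there exists an injective monoid homomorphism i : P → F with F ≅ ℕ^d (d = rank of P^{gp}) such that i(P) is close to F, and for any injective j : P → G with G ≅ ℕ^d and j(P) close to G, there is a unique φ : F → G with j = φ ∘ i. -/

import Mathlib

/-- Every simplicially toric sharp monoid admits a minimal free
resolution. `P` is realized (by its canonical embedding, rank `P^gp = d`) as a
finitely generated sharp saturated submonoid of `ℤ^d` generating `ℤ^d` as a
group, admitting a submonoid generated by `d` elements close to `P`.
Conclusion: there is an injective `i : P →+ ℕ^d` with image close to `ℕ^d`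
which is initial among all such maps (here the target free monoid `G ≅ ℕ^d`
is identified with `ℕ^d`); the unique factorization expresses uniqueness up
to unique isomorphism. -/
theorem stmt7 {d : ℕ} (P : AddSubmonoid (Fin d → ℤ))
    (hsharp : ∀ p ∈ P, -p ∈ P → p = 0)
    (hfg : P.FG)
    (hsat : ∀ x ∈ AddSubgroup.closure (P : Set (Fin d → ℤ)),
      ∀ n : ℕ, 0 < n → n • x ∈ P → x ∈ P)
    (hrank : AddSubgroup.closure (P : Set (Fin d → ℤ)) = ⊤)
    (hsimp : ∃ f : Fin d → (Fin d → ℤ), (∀ i, f i ∈ P) ∧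
      ∀ p ∈ P, ∃ n : ℕ, 0 < n ∧ n • p ∈ AddSubmonoid.closure (Set.range f)) :
    ∃ i : P →+ (Fin d → ℕ), Function.Injective i ∧
      (∀ x : Fin d → ℕ, ∃ n : ℕ, 0 < n ∧ ∃ p : P, n • x = i p) ∧
      (∀ j : P →+ (Fin d → ℕ), Function.Injective j →
        (∀ x : Fin d → ℕ, ∃ n : ℕ, 0 < n ∧ ∃ p : P, n • x = j p) →
        ∃! φ : (Fin d → ℕ) →+ (Fin d → ℕ), ∀ p : P, φ (i p) = j p) := by
  classical
  obtain ⟨f, hfP, hfcl⟩ := hsimp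
  set ι : (Fin d → ℤ) → (Fin d → ℚ) := fun z k => (z k : ℚ) with hιdef
  have ιadd : ∀ z w, ι (z + w) = ι z + ι w := by
    intro z w; funext k; simp [hιdef]
  have ιsmul : ∀ (n : ℕ) (z), ι (n • z) = (n : ℚ) • ι z := by
    intro n z; funext k; simp [hιdef]
  have ιinj : Function.Injective ι := by
    intro z w h; funext k
    have := congrFun h k
    simp only [hιdef] at this
    exact_mod_cast this
  set b : Fin d → (Fin d → ℚ) := fun l => ι (f l) with hbdef
  have hsingle : ∀ r : Fin d, ι (Pi.single r 1) = Pi.single r (1 : ℚ) := by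
    intro r; funext s; simp [hιdef, Pi.single_apply]
  -- every element of the monoid closure of range f is in the span of b
  have hspan1 : ∀ z ∈ AddSubmonoid.closure (Set.range f),
      ι z ∈ Submodule.span ℚ (Set.range b) := by
    intro z hz
    induction hz using AddSubmonoid.closure_induction with
    | mem x hx =>
      obtain ⟨l, rfl⟩ := hx
      exact Submodule.subset_span ⟨l, rfl⟩
    | zero => -- zero
      have : ι 0 = 0 := by funext k; simp [hιdef]
      rw [this]; exact Submodule.zero_mem _
    | add x y hx hy ihx ihy =>
      rw [ιadd]; exact Submodule.add_mem _ ihx ihy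
  have hspanP : ∀ p ∈ P, ι p ∈ Submodule.span ℚ (Set.range b) := by
    intro p hp
    obtain ⟨n, hn, hnp⟩ := hfcl p hp
    have h1 := hspan1 _ hnp
    rw [ιsmul] at h1
    have h2 := Submodule.smul_mem _ ((n : ℚ)⁻¹) h1
    rwa [smul_smul, inv_mul_cancel₀ (by exact_mod_cast hn.ne'), one_smul] at h2
  have hspanZ : ∀ z : Fin d → ℤ, ι z ∈ Submodule.span ℚ (Set.range b) := by
    set S : AddSubgroup (Fin d → ℤ) :=
      { carrier := {z | ι z ∈ Submodule.span ℚ (Set.range b)}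
        add_mem' := fun {x y} hx hy => by
          simp only [Set.mem_setOf_eq] at *
          rw [ιadd]; exact Submodule.add_mem _ hx hy
        zero_mem' := by
          simp only [Set.mem_setOf_eq]
          have : ι 0 = 0 := by funext k; simp [hιdef]
          rw [this]; exact Submodule.zero_mem _
        neg_mem' := fun {x} hx => by
          simp only [Set.mem_setOf_eq] at *
          have : ι (-x) = -(ι x) := by funext k; simp [hιdef]
          rw [this]; exact Submodule.neg_mem _ hx }
    intro z
    have h1 : (P : Set (Fin d → ℤ)) ⊆ S := fun p hp => hspanP p hp
    have h2 : AddSubgroup.closure (P : Set (Fin d → ℤ)) ≤ S :=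
      (AddSubgroup.closure_le S).mpr h1
    rw [hrank] at h2
    exact h2 (AddSubgroup.mem_top z)
  have hspan : ⊤ ≤ Submodule.span ℚ (Set.range b) := by
    intro v _
    have : v = ∑ r : Fin d, (v r) • (Pi.single r (1:ℚ) : Fin d → ℚ) := by
      conv_lhs => rw [← Finset.univ_sum_single v]
      refine Finset.sum_congr rfl (fun r _ => ?_)
      funext s; simp [Pi.single_apply]
    rw [this]
    refine Submodule.sum_mem _ (fun r _ => Submodule.smul_mem _ _ ?_)
    rw [← hsingle r]; exact hspanZ _
  have hcard : Fintype.card (Fin d) = Module.finrank ℚ (Fin d → ℚ) := by simp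
  set B : Module.Basis (Fin d) ℚ (Fin d → ℚ) := basisOfTopLeSpanOfCardEqFinrank b hspan hcard
    with hBdef
  have hBb : ∀ l, B l = b l := by
    intro l; rw [hBdef, coe_basisOfTopLeSpanOfCardEqFinrank]
  set L : Fin d → (Fin d → ℤ) → ℚ := fun k z => B.repr (ι z) k with hLdef
  have hLf : ∀ k l, L k (f l) = if l = k then 1 else 0 := by
    intro k l
    have : ι (f l) = B l := by rw [hBb l]
    rw [hLdef]; simp only [this, Module.Basis.repr_self]
    exact Finsupp.single_apply
  have hLadd : ∀ k z w, L k (z + w) = L k z + L k w := by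
    intro k z w
    simp only [hLdef, ιadd, map_add, Finsupp.add_apply]
  have hLsmul : ∀ k (n : ℕ) z, L k (n • z) = (n : ℚ) * L k z := by
    intro k n z
    simp only [hLdef, ιsmul, map_smul, Finsupp.smul_apply, smul_eq_mul]
  have hL0 : ∀ k, L k 0 = 0 := by
    intro k
    have : ι 0 = 0 := by funext s; simp [hιdef]
    simp [hLdef, this]
  have hLP : ∀ k, ∀ p ∈ P, 0 ≤ L k p := by
    have h1 : ∀ z ∈ AddSubmonoid.closure (Set.range f), ∀ k, 0 ≤ L k z := by
      intro z hz
      induction hz using AddSubmonoid.closure_induction with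
      | mem x hx =>
        obtain ⟨l, rfl⟩ := hx
        intro k; rw [hLf]
        split <;> norm_num
      | zero => intro k; rw [hL0]
      | add x y hx hy ihx ihy =>
        intro k; rw [hLadd]; exact add_nonneg (ihx k) (ihy k)
    intro k p hp
    obtain ⟨n, hn, hnp⟩ := hfcl p hp
    have h2 := h1 _ hnp k
    rw [hLsmul] at h2
    have hn' : (0:ℚ) < n := by exact_mod_cast hn
    nlinarith
  have hLlin : ∀ k z, L k z = ∑ r, (z r : ℚ) * L k (Pi.single r 1) := by
    intro k z
    have hz : ι z = ∑ r, (z r : ℚ) • ι (Pi.single r 1) := by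
      funext s
      rw [Finset.sum_apply]
      simp only [hsingle, Pi.smul_apply, smul_eq_mul]
      rw [Finset.sum_eq_single s]
      · simp [hιdef]
      · intro r _ hr; simp [Pi.single_apply, Ne.symm hr]
      · intro h; exact absurd (Finset.mem_univ s) h
    rw [hLdef]
    simp only [hz, map_sum, map_smul, Finsupp.coe_finset_sum, Finset.sum_apply,
      Finsupp.smul_apply, smul_eq_mul]
  -- common denominators
  set q : Fin d → Fin d → ℚ := fun k r => L k (Pi.single r 1) with hqdef
  set D : Fin d → ℕ := fun k => ∏ r, (q k r).den with hDdef
  have hDpos : ∀ k, 0 < D k := fun k => Finset.prod_pos (fun r _ => (q k r).pos)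
  have hint : ∀ k r, ∃ m : ℤ, (D k : ℚ) * q k r = m := by
    intro k r
    obtain ⟨c, hc⟩ := Finset.dvd_prod_of_mem (fun r => (q k r).den) (Finset.mem_univ r)
    refine ⟨c * (q k r).num, ?_⟩
    have hD : (D k : ℚ) = ((q k r).den : ℚ) * (c : ℚ) := by
      rw [hDdef]; exact_mod_cast congrArg (Nat.cast : ℕ → ℚ) hc
    rw [hD]
    push_cast
    rw [mul_comm ((q k r).den : ℚ) (c:ℚ), mul_assoc, mul_comm ((q k r).den : ℚ) (q k r),
      Rat.mul_den_eq_num]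
  choose m hm using hint
  set A : Fin d → (Fin d → ℤ) → ℤ := fun k z => ∑ r, z r * m k r with hAdef
  have hA : ∀ k z, (A k z : ℚ) = (D k : ℚ) * L k z := by
    intro k z
    rw [hAdef]
    push_cast
    rw [hLlin k z, Finset.mul_sum]
    refine Finset.sum_congr rfl (fun r _ => ?_)
    rw [← hm k r]
    simp only [hqdef]
    ring
  have hAadd : ∀ k z w, A k (z + w) = A k z + A k w := by
    intro k z w
    have h := hA k (z + w)
    rw [hLadd, mul_add, ← hA k z, ← hA k w] at h
    exact_mod_cast h
  have hAneg : ∀ k z, A k (-z) = - A k z := by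
    intro k z
    have h := hA k (-z)
    have hL : L k (-z) = - L k z := by
      have := hLadd k z (-z)
      simp only [add_neg_cancel, hL0] at this
      linarith
    rw [hL] at h
    have h2 := hA k z
    have h3 : (A k (-z) : ℚ) = -(A k z : ℚ) := by rw [h, h2]; ring
    exact_mod_cast h3
  have hAfk : ∀ k, A k (f k) = D k := by
    intro k
    have h := hA k (f k)
    rw [hLf k k, if_pos rfl, mul_one] at h
    exact_mod_cast h
  -- cyclic image
  have hg : ∀ k, ∃ g : ℤ, 0 < g ∧ (∀ z, g ∣ A k z) ∧ ∃ z₀, A k z₀ = g := by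
    intro k
    set H : AddSubgroup ℤ :=
      { carrier := Set.range (A k)
        add_mem' := fun {x y} hx hy => by
          obtain ⟨z, rfl⟩ := hx; obtain ⟨w, rfl⟩ := hy
          exact ⟨z + w, hAadd k z w⟩
        zero_mem' := ⟨0, by simp [hAdef]⟩
        neg_mem' := fun {x} hx => by
          obtain ⟨z, rfl⟩ := hx
          exact ⟨-z, hAneg k z⟩ } with hHdef
    obtain ⟨a, ha⟩ := Int.subgroup_cyclic H
    have hmem : ∀ z, A k z ∈ H := fun z => ⟨z, rfl⟩
    have hdvd : ∀ z, a ∣ A k z := by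
      intro z
      have h := hmem z
      rw [ha, AddSubgroup.mem_closure_singleton] at h
      obtain ⟨n, hn⟩ := h
      exact ⟨n, by rw [← hn, smul_eq_mul]; ring⟩
    have haH : a ∈ H := by
      rw [ha]; exact AddSubgroup.mem_closure_singleton.mpr ⟨1, one_smul _ _⟩
    obtain ⟨z₀, hz₀⟩ := haH
    have hane : a ≠ 0 := by
      intro h0
      have h1 := hdvd (f k)
      rw [h0] at h1
      have h2 := zero_dvd_iff.mp h1
      rw [hAfk k] at h2
      exact absurd h2 (by exact_mod_cast (hDpos k).ne')
    rcases lt_or_gt_of_ne hane with hlt | hgt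
    · refine ⟨-a, by omega, fun z => (neg_dvd (α := ℤ)).mpr (hdvd z), -z₀, by rw [hAneg, hz₀]⟩
    · exact ⟨a, hgt, hdvd, z₀, hz₀⟩
  choose g hgpos hgdvd hgsurj using hg
  set lam : Fin d → (Fin d → ℤ) → ℤ := fun k z => A k z / g k with hlamdef
  have hlam : ∀ k z, g k * lam k z = A k z := fun k z => Int.mul_ediv_cancel' (hgdvd k z)
  have hgne : ∀ k, (g k : ℚ) ≠ 0 := fun k => by exact_mod_cast (hgpos k).ne'
  have hlamQ : ∀ k z, (lam k z : ℚ) = (D k : ℚ) / (g k : ℚ) * L k z := by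
    intro k z
    have h1 : (g k : ℚ) * (lam k z : ℚ) = (A k z : ℚ) := by exact_mod_cast hlam k z
    rw [hA] at h1
    rw [div_mul_eq_mul_div, ← h1, mul_comm ((g k : ℚ)) _, mul_div_assoc,
      div_self (hgne k), mul_one]
  have hgne0 : ∀ k, g k ≠ 0 := fun k => (hgpos k).ne'
  have hlamadd : ∀ k z w, lam k (z + w) = lam k z + lam k w := by
    intro k z w
    have h := hlam k (z + w)
    rw [hAadd, ← hlam k z, ← hlam k w, ← mul_add] at h
    exact mul_left_cancel₀ (hgne0 k) h
  set lamHom : Fin d → ((Fin d → ℤ) →+ ℤ) := fun k => AddMonoidHom.mk' (lam k) (hlamadd k)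
    with hlamHomdef
  have hlamHom : ∀ k z, lamHom k z = lam k z := fun k z => rfl
  have hDgpos : ∀ k, 0 < (D k : ℚ) / (g k : ℚ) := by
    intro k
    apply div_pos
    · exact_mod_cast hDpos k
    · exact_mod_cast hgpos k
  have hlamP : ∀ k, ∀ p ∈ P, 0 ≤ lam k p := by
    intro k p hp
    have h1 : (0:ℚ) ≤ (lam k p : ℚ) := by
      rw [hlamQ]
      exact mul_nonneg (hDgpos k).le (hLP k p hp)
    exact_mod_cast h1
  have hlamfk : ∀ k l, l ≠ k → lam k (f l) = 0 := by
    intro k l hlk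
    have h1 : (lam k (f l) : ℚ) = 0 := by
      rw [hlamQ, hLf, if_neg hlk, mul_zero]
    exact_mod_cast h1
  have hlamfkpos : ∀ k, 0 < lam k (f k) := by
    intro k
    have h1 : (0:ℚ) < (lam k (f k) : ℚ) := by
      rw [hlamQ, hLf, if_pos rfl, mul_one]
      exact hDgpos k
    exact_mod_cast h1
  set Mk : Fin d → ℕ := fun k => (lam k (f k)).toNat with hMkdef
  have hMkpos : ∀ k, 0 < Mk k := fun k => by
    have := hlamfkpos k
    rw [hMkdef]
    simp only []
    omega
  have hMkcast : ∀ k, (Mk k : ℤ) = lam k (f k) := fun k =>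
    Int.toNat_of_nonneg (hlamfkpos k).le
  have hlameq : ∀ z w, (∀ k, lam k z = lam k w) → z = w := by
    intro z w h
    have hL : ∀ k, L k z = L k w := by
      intro k
      have h1 : (lam k z : ℚ) = (lam k w : ℚ) := by exact_mod_cast h k
      rw [hlamQ, hlamQ] at h1
      exact mul_left_cancel₀ (hDgpos k).ne' h1
    have : ι z = ι w := by
      apply B.ext_elem
      intro k
      exact hL k
    exact ιinj this
  -- the minimal free resolution map
  have hlamPn : ∀ (p : P) (k : Fin d), 0 ≤ lam k ↑p := fun p k => hlamP k ↑p p.2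
  have hlam0 : ∀ k, lam k 0 = 0 := by
    intro k
    have := hlamadd k 0 0
    simp only [add_zero] at this
    omega
  set iHom : P →+ (Fin d → ℕ) :=
    { toFun := fun p k => (lam k ↑p).toNat
      map_zero' := by
        funext k
        simp only [AddSubmonoid.coe_zero, hlam0 k, Int.toNat_zero, Pi.zero_apply]
      map_add' := fun p p' => by
        funext k
        simp only [AddSubmonoid.coe_add, hlamadd k, Pi.add_apply]
        exact Int.toNat_add (hlamPn p k) (hlamPn p' k) } with hiHomdef
  have hi_app : ∀ (p : P) (k : Fin d), iHom p k = (lam k ↑p).toNat := fun p k => rfl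
  have hi_cast : ∀ (p : P) (k : Fin d), ((iHom p k : ℤ)) = lam k ↑p := fun p k =>
    Int.toNat_of_nonneg (hlamPn p k)
  have hiinj : Function.Injective iHom := by
    intro p p' h
    have h2 : ∀ k, lam k ↑p = lam k ↑p' := by
      intro k
      rw [← hi_cast p k, ← hi_cast p' k, congrFun h k]
    exact Subtype.ext (hlameq _ _ h2)
  have hiclose : ∀ x : Fin d → ℕ, ∃ n : ℕ, 0 < n ∧ ∃ p : P, n • x = iHom p := by
    intro x
    refine ⟨∏ l, Mk l, Finset.prod_pos (fun l _ => hMkpos l), ?_⟩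
    set t : Fin d → ℕ := fun k => (∏ l ∈ Finset.univ.erase k, Mk l) * x k with htdef
    have hpP : (∑ k, t k • f k) ∈ P :=
      AddSubmonoid.sum_mem P (fun k _ => AddSubmonoid.nsmul_mem P (hfP k) _)
    refine ⟨⟨∑ k, t k • f k, hpP⟩, ?_⟩
    funext r
    have hlamp : lam r (∑ k, t k • f k) = (∏ l, Mk l) * x r := by
      have h1 : lamHom r (∑ k, t k • f k) = ∑ k, (t k : ℤ) * lam r (f k) := by
        rw [map_sum]
        refine Finset.sum_congr rfl (fun k _ => ?_)
        rw [AddMonoidHom.map_nsmul, hlamHom, nsmul_eq_mul]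
      rw [hlamHom] at h1
      rw [h1, Finset.sum_eq_single r]
      · rw [← hMkcast r, htdef]
        push_cast
        rw [mul_assoc, mul_comm ((x r : ℤ)) ((Mk r : ℤ)), ← mul_assoc, ← Nat.cast_prod]
        norm_cast
        rw [Finset.prod_erase_mul _ _ (Finset.mem_univ r)]
      · intro k _ hk
        rw [hlamfk r k hk, mul_zero]
      · intro h; exact absurd (Finset.mem_univ r) h
    show (∏ l, Mk l) * x r = (lam r _).toNat
    rw [hlamp]
    norm_cast
  -- auxiliary facts for the universal property
  have hLneg : ∀ k z, L k (-z) = - L k z := by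
    intro k z
    have h := hLadd k z (-z)
    simp only [add_neg_cancel, hL0] at h
    linarith
  have hLsub : ∀ k z w, L k (z - w) = L k z - L k w := by
    intro k z w
    rw [sub_eq_add_neg, hLadd, hLneg, sub_eq_add_neg]
  have hdiff : ∀ z : Fin d → ℤ, ∃ p q : P, z = ↑p - ↑q := by
    set S : AddSubgroup (Fin d → ℤ) :=
      { carrier := {z | ∃ p q : P, z = ↑p - ↑q}
        add_mem' := by
          rintro x y ⟨p, qq, hx⟩ ⟨p', q', hy⟩
          exact ⟨p + p', qq + q', by
            rw [hx, hy]; push_cast [AddSubmonoid.coe_add]; abel⟩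
        zero_mem' := ⟨0, 0, by simp⟩
        neg_mem' := by
          rintro x ⟨p, qq, hx⟩
          exact ⟨qq, p, by rw [hx]; abel⟩ } with hSdef
    intro z
    have h1 : (P : Set (Fin d → ℤ)) ⊆ S := fun p hp => ⟨⟨p, hp⟩, 0, by simp⟩
    have h2 := (AddSubgroup.closure_le S).mpr h1
    rw [hrank] at h2
    exact h2 (AddSubgroup.mem_top z)
  have hclP : ∀ z ∈ AddSubmonoid.closure (Set.range f), z ∈ P := by
    intro z hz
    refine (AddSubmonoid.closure_le (S := P)).mpr ?_ hz
    rintro x ⟨l, rfl⟩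
    exact hfP l
  set F : Fin d → P := fun l => ⟨f l, hfP l⟩ with hFdef
  refine ⟨iHom, hiinj, hiclose, ?_⟩
  intro j hjinj hjclose
  set c : Fin d → Fin d → ℕ := fun s l => j (F l) s with hcdef
  -- the key linear formula for j
  have hjQ : ∀ (p : P) (s : Fin d), ((j p s : ℚ)) = ∑ l, (c s l : ℚ) * L l ↑p := by
    have hstep : ∀ z ∈ AddSubmonoid.closure (Set.range f),
        ∀ (hz : z ∈ P) (s : Fin d), ((j ⟨z, hz⟩ s : ℚ)) = ∑ l, (c s l : ℚ) * L l z := by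
      intro z hz
      induction hz using AddSubmonoid.closure_induction with
      | mem x hx =>
        obtain ⟨l₀, rfl⟩ := hx
        intro hz s
        have he : (⟨f l₀, hz⟩ : P) = F l₀ := Subtype.ext rfl
        rw [he, Finset.sum_eq_single l₀]
        · rw [hLf, if_pos rfl, mul_one, hcdef]
        · intro l _ hl
          rw [hLf, if_neg (Ne.symm (by exact fun hh => hl (by rw [hh]))), mul_zero]
        · intro h; exact absurd (Finset.mem_univ l₀) h
      | zero =>
        intro hz s
        have he : (⟨(0 : Fin d → ℤ), hz⟩ : P) = 0 := Subtype.ext rfl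
        rw [he, map_zero]
        simp only [Pi.zero_apply, Nat.cast_zero, hL0, mul_zero, Finset.sum_const_zero]
      | add x y hx hy ihx ihy =>
        intro hz s
        have hxP : x ∈ P := hclP x hx
        have hyP : y ∈ P := hclP y hy
        have he : (⟨x + y, hz⟩ : P) = ⟨x, hxP⟩ + ⟨y, hyP⟩ := Subtype.ext rfl
        rw [he, map_add]
        have h1 := ihx hxP s
        have h2 := ihy hyP s
        simp only [Pi.add_apply, Nat.cast_add, hLadd, mul_add, Finset.sum_add_distrib]
        rw [h1, h2]
    intro p s
    obtain ⟨n, hn, hnp⟩ := hfcl ↑p p.2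
    have hnP : (n : ℕ) • (↑p : Fin d → ℤ) ∈ P := AddSubmonoid.nsmul_mem P p.2 n
    have he : (⟨n • (↑p : Fin d → ℤ), hnP⟩ : P) = n • p := Subtype.ext rfl
    have h1 := hstep _ hnp hnP s
    rw [he, map_nsmul] at h1
    have h2 : ∀ l, L l (n • (↑p : Fin d → ℤ)) = n * L l ↑p := fun l => hLsmul l n ↑p
    simp only [h2, Pi.smul_apply, smul_eq_mul, Nat.cast_mul] at h1
    have hn' : ((n : ℚ)) ≠ 0 := by exact_mod_cast hn.ne'
    have h3 : (n : ℚ) * ((j p s : ℚ)) = (n : ℚ) * ∑ l, (c s l : ℚ) * L l ↑p := by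
      rw [Finset.mul_sum]
      rw [h1]
      refine Finset.sum_congr rfl (fun l _ => by ring)
    exact mul_left_cancel₀ hn' h3
  -- the ray lemma: each column of c has a single support row
  have hray : ∀ r : Fin d, ∃ l, 0 < c r l ∧ ∀ s, s ≠ r → c s l = 0 := by
    intro r
    obtain ⟨n, hn, p, hp⟩ := hjclose (Pi.single r 1)
    have hjp : ∀ s, j p s = n * (Pi.single r 1 : Fin d → ℕ) s := by
      intro s
      rw [← hp]; rfl
    have hterm_nonneg : ∀ s, ∀ l ∈ Finset.univ, (0:ℚ) ≤ (c s l : ℚ) * L l ↑p :=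
      fun s l _ => mul_nonneg (by positivity) (hLP l ↑p p.2)
    have hsum_pos : (0:ℚ) < ∑ l, (c r l : ℚ) * L l ↑p := by
      rw [← hjQ p r, hjp r]
      simp only [Pi.single_eq_same, mul_one]
      exact_mod_cast hn
    have hzero : ∀ s, s ≠ r → ∀ l, (c s l : ℚ) * L l ↑p = 0 := by
      intro s hs l
      have h0 : (∑ l, (c s l : ℚ) * L l ↑p) = 0 := by
        rw [← hjQ p s, hjp s]
        simp [Pi.single_eq_of_ne hs]
      exact (Finset.sum_eq_zero_iff_of_nonneg (hterm_nonneg s)).mp h0 l (Finset.mem_univ l)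
    obtain ⟨l, _, hl⟩ := Finset.exists_ne_zero_of_sum_ne_zero hsum_pos.ne'
    have hLpos : L l ↑p ≠ 0 := by
      intro h0; exact hl (by rw [h0, mul_zero])
    refine ⟨l, ?_, ?_⟩
    · rcases Nat.eq_zero_or_pos (c r l) with h0 | h0
      · exact absurd (by rw [h0]; simp) hl
      · exact h0
    · intro s hs
      have h1 := hzero s hs l
      rcases mul_eq_zero.mp h1 with h2 | h2
      · exact_mod_cast h2
      · exact absurd h2 hLpos
  choose ℓf hℓpos hℓzero using hray
  have hℓinj : Function.Injective ℓf := by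
    intro r r' h
    by_contra hne
    have h1 := hℓzero r' r hne
    rw [← h] at h1
    exact absurd h1 (hℓpos r).ne'
  have hℓsurj : Function.Surjective ℓf := Finite.injective_iff_surjective.mp hℓinj
  have hcol : ∀ r l, l ≠ ℓf r → c r l = 0 := by
    intro r l hl
    obtain ⟨r', rfl⟩ := hℓsurj l
    have hr' : r ≠ r' := by
      intro hh; exact hl (by rw [hh])
    exact hℓzero r' r hr'
  have hjsingle : ∀ (p : P) (r : Fin d),
      ((j p r : ℚ)) = (c r (ℓf r) : ℚ) * L (ℓf r) ↑p := by
    intro p r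
    rw [hjQ p r, Finset.sum_eq_single (ℓf r)]
    · intro l _ hl
      rw [hcol r l hl]
      simp
    · intro h; exact absurd (Finset.mem_univ (ℓf r)) h
  -- integrality of the matrix coefficients
  have ha : ∀ r : Fin d, ∃ a : ℕ, ∀ p : P,
      ((j p r : ℚ)) = (a : ℚ) * ((lam (ℓf r) ↑p : ℤ) : ℚ) := by
    intro r
    set k := ℓf r with hkdef
    obtain ⟨z₀, hz₀⟩ := hgsurj k
    have hlamz₀ : lam k z₀ = 1 := by
      have h1 := hlam k z₀
      rw [hz₀] at h1
      exact mul_left_cancel₀ (hgne0 k) (by rw [h1, mul_one])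
    obtain ⟨p₀, q₀, hpq⟩ := hdiff z₀
    set aZ : ℤ := (j p₀ r : ℤ) - (j q₀ r : ℤ) with haZdef
    have haZQ : (aZ : ℚ) = (c r k : ℚ) * L k z₀ := by
      rw [haZdef]
      push_cast
      rw [hjsingle p₀ r, hjsingle q₀ r, hpq, hLsub]
      ring
    have hlamz₀Q : ((1:ℚ)) = (D k : ℚ) / (g k : ℚ) * L k z₀ := by
      rw [← hlamQ, hlamz₀, Int.cast_one]
    have key : ∀ p : P, ((j p r : ℚ)) = (aZ : ℚ) * ((lam k ↑p : ℤ) : ℚ) := by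
      intro p
      rw [haZQ, hlamQ, hjsingle p r]
      calc (c r k : ℚ) * L k ↑p
          = (c r k : ℚ) * L k ↑p * ((D k : ℚ) / (g k : ℚ) * L k z₀) := by
            rw [← hlamz₀Q]; ring
        _ = (c r k : ℚ) * L k z₀ * ((D k : ℚ) / (g k : ℚ) * L k ↑p) := by ring
    have haZnn : 0 ≤ aZ := by
      have h1 := key (F k)
      have h2 : ((lam k ↑(F k) : ℤ) : ℚ) > 0 := by
        have : (↑(F k) : Fin d → ℤ) = f k := rfl
        rw [this]
        exact_mod_cast hlamfkpos k
      have h3 : (0:ℚ) ≤ (j (F k) r : ℚ) := by positivity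
      have h4 : (0:ℚ) ≤ (aZ : ℚ) := by nlinarith [h1, h2, h3]
      exact_mod_cast h4
    refine ⟨aZ.toNat, fun p => ?_⟩
    have h5 : ((aZ.toNat : ℤ)) = aZ := Int.toNat_of_nonneg haZnn
    have h6 : ((aZ.toNat : ℚ)) = (aZ : ℚ) := by exact_mod_cast congrArg (Int.cast : ℤ → ℚ) h5
    rw [h6]
    exact key p
  choose a hA using ha
  -- build φ
  set φ : (Fin d → ℕ) →+ (Fin d → ℕ) :=
    { toFun := fun x r => a r * x (ℓf r)
      map_zero' := by funext r; simp
      map_add' := fun x y => by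
        funext r
        simp only [Pi.add_apply]
        ring } with hφdef
  have hφapp : ∀ (x : Fin d → ℕ) (r : Fin d), φ x r = a r * x (ℓf r) := fun x r => rfl
  have hφi : ∀ p : P, φ (iHom p) = j p := by
    intro p
    funext r
    have h1 : ((φ (iHom p) r : ℚ)) = ((j p r : ℚ)) := by
      rw [hφapp, hA r p]
      push_cast
      rw [← hi_cast p (ℓf r)]
      push_cast
      ring
    exact_mod_cast h1
  refine ⟨φ, hφi, ?_⟩
  intro ψ hψ
  have hx1 : ∀ k, ψ (Pi.single k 1) = φ (Pi.single k 1) := by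
    intro k
    obtain ⟨n, hn, p, hp⟩ := hiclose (Pi.single k 1)
    have h1 : n • ψ (Pi.single k 1) = n • φ (Pi.single k 1) := by
      rw [← map_nsmul, ← map_nsmul, hp, hψ p, hφi p]
    funext s
    have h2 := congrFun h1 s
    simp only [Pi.smul_apply, smul_eq_mul] at h2
    exact Nat.eq_of_mul_eq_mul_left hn h2
  apply AddMonoidHom.ext
  intro x
  have hx : x = ∑ k, (x k) • Pi.single k 1 := by
    conv_lhs => rw [← Finset.univ_sum_single x]
    refine Finset.sum_congr rfl (fun k _ => ?_)
    funext s
    simp [Pi.single_apply, mul_comm]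
  rw [hx, map_sum, map_sum]
  refine Finset.sum_congr rfl (fun k _ => ?_)
  rw [map_nsmul, map_nsmul, hx1 k]
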